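/- If X is finite and F : X × X → X is associative and quasitrivial, then every automorphism σ of (X, ≾_F) (a permutation with x ≾_F y iff σ(x) ≾_F σ(y)) satisfies σ(x) ∼_F x for all x ∈ X; consequently F_σ = F for every such automorphism. -/

import Mathlib

def Assoc {X : Type*} (F : X → X → X) : Prop :=
  ∀ x y z, F (F x y) z = F x (F y z)

def Quasitrivial {X : Type*} (F : X → X → X) : Prop :=
  ∀ x y, F x y = x ∨ F x y = y

/-- The weak ordering associated with `F`: `x ≾_F y` iff `F x y = y` or `F y x = y`. -/
def wle {X : Type*} (F : X → X → X) (x y : X) : Prop :=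
  F x y = y ∨ F y x = y

/-- Symmetric part of `≾_F`. -/
def simF {X : Type*} (F : X → X → X) (x y : X) : Prop :=
  wle F x y ∧ wle F y x

/-- The σ-conjugate of `F`. -/
def conjOp {X : Type*} (σ : Equiv.Perm X) (F : X → X → X) : X → X → X :=
  fun x y => σ (F (σ.symm x) (σ.symm y))

section Aux

variable {X : Type*} {F : X → X → X}

lemma myFxx (hQ : Quasitrivial F) (x : X) : F x x = x := (hQ x x).elim id id

lemma my_wle_refl (hQ : Quasitrivial F) (x : X) : wle F x x := Or.inl (myFxx hQ x)

lemma my_wle_total (hQ : Quasitrivial F) (x y : X) : wle F x y ∨ wle F y x := by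
  rcases hQ x y with h | h
  · exact Or.inr (Or.inr h)
  · exact Or.inl (Or.inl h)

lemma my_wle_trans (hA : Assoc F) (hQ : Quasitrivial F) {x y z : X}
    (hxy : wle F x y) (hyz : wle F y z) : wle F x z := by
  rcases hxy with h1 | h1 <;> rcases hyz with h2 | h2
  · left
    calc F x z = F x (F y z) := by rw [h2]
    _ = F (F x y) z := (hA x y z).symm
    _ = F y z := by rw [h1]
    _ = z := h2
  · by_contra h
    simp only [wle, not_or] at h
    have ha : F x z = x := (hQ x z).resolve_right h.1
    have hb : F z x = x := (hQ z x).resolve_left h.2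
    have key := hA z x y
    rw [hb, h1, h2] at key
    exact h.1 (by rw [← key, h1])
  · by_contra h
    simp only [wle, not_or] at h
    have ha : F x z = x := (hQ x z).resolve_right h.1
    have key := hA y x z
    rw [h1, h2, ha, h1] at key
    exact h.2 (by rw [key]; exact h1)
  · by_contra h
    simp only [wle, not_or] at h
    have key := hA z y x
    rw [h2, h1, h2] at key
    exact h.2 key

lemma my_simF_symm {a b : X} (h : simF F a b) : simF F b a := ⟨h.2, h.1⟩

lemma my_simF_trans (hA : Assoc F) (hQ : Quasitrivial F) {a b c : X}
    (h : simF F a b) (g : simF F b c) : simF F a c :=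
  ⟨my_wle_trans hA hQ h.1 g.1, my_wle_trans hA hQ g.2 h.2⟩

lemma my_pair {a b : X} (hne : a ≠ b) (hab : simF F a b) (h1 : F a b = a) : F b a = b := by
  rcases hab.1 with h | h
  · rw [h1] at h; exact absurd h hne
  · exact h

/-- Projection consistency inside an equivalence class, basic version. -/
lemma my_pi (hA : Assoc F) (hQ : Quasitrivial F) {a b c : X}
    (hab : simF F a b) (hne : a ≠ b) (h1 : F a b = a)
    (hca : simF F c a) : F a c = a ∧ F c a = c := by
  by_cases hc : c = a
  · rw [hc]; exact ⟨myFxx hQ a, myFxx hQ a⟩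
  · have hac : F a c = a := by
      by_contra hx
      have hac' : F a c = c := (hQ a c).resolve_left hx
      have hcb : c ≠ b := by
        intro e; subst e; exact hx h1
      have hca' : F c a = a := by
        rcases hca.1 with h | h
        · exact h
        · exact absurd h hx
      rcases hQ b c with hbc | hbc
      · have key := hA a b c
        rw [h1, hbc, h1] at key
        exact hx key
      · have hbc' : simF F b c := my_simF_trans hA hQ (my_simF_symm hab) (my_simF_symm hca)
        have hcb' : F c b = b := by
          rcases hbc'.2 with h | h
          · exact h
          · rw [hbc] at h; exact absurd h hcb
        have key := hA a c b
        rw [hac', hcb', h1] at key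
        exact hne key.symm
    refine ⟨hac, ?_⟩
    rcases hca.2 with h | h
    · rw [hac] at h; exact absurd h.symm hc
    · exact h

/-- Projection consistency inside an equivalence class, full version. -/
lemma my_Pi (hA : Assoc F) (hQ : Quasitrivial F) {a b a' b' : X}
    (hab : simF F a b) (hne : a ≠ b) (h1 : F a b = a)
    (ha' : simF F a' a) (hb' : simF F b' b) (_hne' : a' ≠ b') : F a' b' = a' := by
  have hb'a : simF F b' a := my_simF_trans hA hQ hb' (my_simF_symm hab)
  by_cases h : a' = a
  · subst h; exact (my_pi hA hQ hab hne h1 hb'a).1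
  · have step1 : F a' a = a' := (my_pi hA hQ hab hne h1 ha').2
    have hb'a' : simF F b' a' := my_simF_trans hA hQ hb'a (my_simF_symm ha')
    exact (my_pi hA hQ ha' h step1 hb'a').1

lemma my_flip_assoc (hA : Assoc F) : Assoc (fun x y => F y x) :=
  fun x y z => (hA z y x).symm

lemma my_flip_quasi (hQ : Quasitrivial F) : Quasitrivial (fun x y => F y x) :=
  fun x y => (hQ y x).symm

lemma my_simF_flip {a b : X} : simF (fun x y => F y x) a b ↔ simF F a b := by
  simp only [simF, wle]; tauto

end Aux

theorem stmt_7 {X : Type*} [Finite X] (F : X → X → X)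
    (hA : Assoc F) (hQ : Quasitrivial F) (σ : Equiv.Perm X)
    (haut : ∀ x y : X, wle F x y ↔ wle F (σ x) (σ y)) :
    (∀ x : X, simF F (σ x) x) ∧ conjOp σ F = F := by
  -- no point can strictly increase under an automorphism
  have noinc : ∀ (τ : Equiv.Perm X), (∀ x y, wle F x y ↔ wle F (τ x) (τ y)) →
      ∀ x, wle F x (τ x) → wle F (τ x) x := by
    intro τ hτ x h1
    by_contra h2
    have key : ∀ n : ℕ, (τ ^ (n + 1)) x = τ ((τ ^ n) x) := by
      intro n; rw [pow_succ']; rfl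
    have step : ∀ n : ℕ, wle F ((τ ^ n) x) ((τ ^ (n + 1)) x) ∧
        ¬ wle F ((τ ^ (n + 1)) x) ((τ ^ n) x) := by
      intro n; induction n with
      | zero => simpa using ⟨h1, h2⟩
      | succ n ih =>
        rw [key (n + 1), key n]
        rw [key n] at ih
        exact ⟨(hτ _ _).mp ih.1, fun h => ih.2 ((hτ _ _).mpr h)⟩
    have chain : ∀ n : ℕ, wle F x ((τ ^ (n + 1)) x) ∧ ¬ wle F ((τ ^ (n + 1)) x) x := by
      intro n; induction n with
      | zero => simpa using step 0
      | succ n ih =>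
        refine ⟨my_wle_trans hA hQ ih.1 (step (n + 1)).1, fun h => ?_⟩
        exact (step (n + 1)).2 (my_wle_trans hA hQ h ih.1)
    have hpos : 0 < orderOf τ := orderOf_pos τ
    have hord : τ ^ orderOf τ = 1 := pow_orderOf_eq_one τ
    have hc := (chain (orderOf τ - 1)).2
    have heq : orderOf τ - 1 + 1 = orderOf τ := by omega
    rw [heq, hord] at hc
    simp only [Equiv.Perm.one_apply] at hc
    exact hc (my_wle_refl hQ x)
  have hτ' : ∀ a b, wle F a b ↔ wle F (σ⁻¹ a) (σ⁻¹ b) := by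
    intro a b
    rw [haut (σ⁻¹ a) (σ⁻¹ b)]
    simp
  have hsim : ∀ x : X, simF F (σ x) x := by
    intro x
    rcases my_wle_total hQ x (σ x) with h | h
    · exact ⟨noinc σ haut x h, h⟩
    · have h' : wle F (σ x) (σ⁻¹ (σ x)) := by simpa using h
      have := noinc σ⁻¹ hτ' (σ x) h'
      simp only [Equiv.Perm.inv_def, Equiv.symm_apply_apply] at this
      exact ⟨h, this⟩
  have hcomm : ∀ a b : X, σ (F a b) = F (σ a) (σ b) := by
    intro a b
    by_cases hwab : wle F a b
    · by_cases hwba : wle F b a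
      · -- a ∼ b
        by_cases he : a = b
        · subst he
          rw [myFxx hQ a, myFxx hQ (σ a)]
        · have hneσ : σ a ≠ σ b := fun h => he (σ.injective h)
          rcases hQ a b with h1 | h1
          · rw [h1]
            exact (my_Pi hA hQ ⟨hwab, hwba⟩ he h1 (hsim a) (hsim b) hneσ).symm
          · rw [h1]
            have hG := my_Pi (F := fun x y => F y x) (my_flip_assoc hA) (my_flip_quasi hQ)
              (my_simF_flip.mpr (my_simF_symm ⟨hwab, hwba⟩)) (Ne.symm he) h1
              (my_simF_flip.mpr (hsim b)) (my_simF_flip.mpr (hsim a)) (Ne.symm hneσ)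
            exact hG.symm
      · -- strict a < b
        have h1 : F a b = b := by
          simp only [wle, not_or] at hwba
          exact (hQ a b).resolve_left hwba.2
        have hwba' : ¬ wle F (σ b) (σ a) := fun h => hwba ((haut b a).mpr h)
        have h2 : F (σ a) (σ b) = σ b := by
          simp only [wle, not_or] at hwba'
          exact (hQ (σ a) (σ b)).resolve_left hwba'.2
        rw [h1, h2]
    · -- strict b < a
      have h1 : F a b = a := by
        simp only [wle, not_or] at hwab
        exact (hQ a b).resolve_right hwab.1
      have hwab' : ¬ wle F (σ a) (σ b) := fun h => hwab ((haut a b).mpr h)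
      have h2 : F (σ a) (σ b) = σ a := by
        simp only [wle, not_or] at hwab'
        exact (hQ (σ a) (σ b)).resolve_right hwab'.1
      rw [h1, h2]
  refine ⟨hsim, ?_⟩
  funext x y
  show σ (F (σ.symm x) (σ.symm y)) = F x y
  rw [hcomm]
  simp
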